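/- Let z ∈ ℝ, let g be a real polynomial with g(z) ≠ 0, let k < p be natural numbers, let α : ℕ → ℝ satisfy α_{k+1} ≠ 0, and let f(ξ) = Σ_{m=k+1}^{p} α_m ξ^m. Then, as δ → 0⁺, the squared L² norm ∫_z^{z+δ}∫_0^δ (g(ξ₁))²(f(ξ₂))² dξ₂ dξ₁ is Θ(δ^{2k+4}). -/

import Mathlib

open Topology Asymptotics Polynomial intervalIntegral

private lemma pow_isLittleO_pow' {d e : ℕ} (h : d < e) :
    (fun x : ℝ => x ^ e) =o[𝓝[>] (0:ℝ)] (fun x => x ^ d) := by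
  have h1 : (fun x : ℝ => x ^ (e - d)) =o[𝓝[>] (0:ℝ)] (fun _ => (1:ℝ)) := by
    rw [isLittleO_one_iff]
    have := (continuous_pow (e - d)).tendsto (0:ℝ)
    rw [zero_pow (by omega : e - d ≠ 0)] at this
    exact this.mono_left nhdsWithin_le_nhds
  have h2 := h1.mul_isBigO (isBigO_refl (fun x : ℝ => x ^ d) (𝓝[>] (0:ℝ)))
  simpa [← pow_add, Nat.sub_add_cancel h.le] using h2

/-- Configuration (b): for `φ(ξ₁,ξ₂) = g(ξ₁) f(ξ₂)` with `g(z) ≠ 0` and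
`f(ξ) = ∑_{m=k+1}^{p} α_m ξ^m`, `α_{k+1} ≠ 0`, the squared `L²` norm of `φ` on
`[z,z+δ] × [0,δ]` is `Θ(δ^{2k+4})` as `δ → 0⁺`. -/
theorem l2_norm_asymptotics_config_b (z : ℝ)
    (g : Polynomial ℝ) (hg : g.eval z ≠ 0)
    (k p : ℕ) (hkp : k < p) (α : ℕ → ℝ) (hα : α (k + 1) ≠ 0) :
    (fun δ : ℝ => ∫ ξ₁ in z..(z + δ), ∫ ξ₂ in (0:ℝ)..δ,
        (g.eval ξ₁) ^ 2 * (∑ m ∈ Finset.Icc (k + 1) p, α m * ξ₂ ^ m) ^ 2)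
      =Θ[𝓝[>] (0:ℝ)] (fun δ : ℝ => δ ^ (2 * k + 4)) := by
  set s : Finset ℕ := Finset.Icc (k + 1) p with hs
  have hks : k + 1 ∈ s := Finset.mem_Icc.mpr ⟨le_refl _, hkp⟩
  set A : ℝ → ℝ := fun δ => ∫ ξ in z..(z + δ), (g.eval ξ) ^ 2 with hA
  set B : ℝ → ℝ := fun δ => ∫ ξ in (0:ℝ)..δ, (∑ m ∈ s, α m * ξ ^ m) ^ 2 with hB
  -- factor the double integral
  have key : (fun δ : ℝ => ∫ ξ₁ in z..(z + δ), ∫ ξ₂ in (0:ℝ)..δ,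
      (g.eval ξ₁) ^ 2 * (∑ m ∈ s, α m * ξ₂ ^ m) ^ 2) = fun δ => A δ * B δ := by
    funext δ
    simp_rw [intervalIntegral.integral_const_mul]
    rw [intervalIntegral.integral_mul_const]
  rw [key]
  -- B computed explicitly
  have hBeq : B = fun δ => ∑ q ∈ s ×ˢ s,
      (α q.1 * α q.2) * (δ ^ (q.1 + q.2 + 1) / (q.1 + q.2 + 1)) := by
    funext δ
    have hsq : ∀ ξ : ℝ, (∑ m ∈ s, α m * ξ ^ m) ^ 2
        = ∑ m ∈ s, ∑ n ∈ s, (α m * α n) * ξ ^ (m + n) := by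
      intro ξ
      rw [sq, Finset.sum_mul_sum]
      exact Finset.sum_congr rfl fun m _ => Finset.sum_congr rfl fun n _ => by
        rw [pow_add]; ring
    rw [hB]
    simp_rw [hsq]
    rw [intervalIntegral.integral_finset_sum (fun m _ =>
      ((continuous_finset_sum _ fun n _ =>
        (by fun_prop : Continuous fun ξ : ℝ =>
          α m * α n * ξ ^ (m + n))).intervalIntegrable _ _))]
    rw [Finset.sum_product]
    refine Finset.sum_congr rfl fun m _ => ?_
    rw [intervalIntegral.integral_finset_sum (fun n _ =>
      ((by fun_prop : Continuous fun ξ : ℝ =>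
        α m * α n * ξ ^ (m + n)).intervalIntegrable _ _))]
    refine Finset.sum_congr rfl fun n _ => ?_
    rw [intervalIntegral.integral_const_mul, integral_pow]
    rw [zero_pow (by omega : m + n + 1 ≠ 0)]
    push_cast
    ring
  -- B is Θ(δ^(2k+3))
  have hBθ : B =Θ[𝓝[>] (0:ℝ)] fun δ => δ ^ (2 * k + 3) := by
    have hmem : ((k+1, k+1) : ℕ × ℕ) ∈ s ×ˢ s := Finset.mem_product.mpr ⟨hks, hks⟩
    have hsplit : B = (fun δ : ℝ => (α (k+1) * α (k+1)) * (δ ^ (2*k+3) / (2*k+3)))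
        + fun δ => ∑ q ∈ (s ×ˢ s).erase (k+1, k+1),
            (α q.1 * α q.2) * (δ ^ (q.1 + q.2 + 1) / (q.1 + q.2 + 1)) := by
      funext δ
      rw [hBeq]
      dsimp only
      rw [← Finset.add_sum_erase _ _ hmem]
      have h1 : (k+1) + (k+1) + 1 = 2*k+3 := by omega
      dsimp only
      congr 1
      rw [h1]
      push_cast
      ring
    rw [hsplit]
    have hmain : (fun δ : ℝ => (α (k+1) * α (k+1)) * (δ ^ (2*k+3) / (2*k+3)))
        =Θ[𝓝[>] (0:ℝ)] fun δ => δ ^ (2*k+3) := by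
      have hne : (α (k+1) * α (k+1)) / ((2*k+3 : ℕ) : ℝ) ≠ 0 := by
        apply div_ne_zero (mul_ne_zero hα hα)
        positivity
      have heq : (fun δ : ℝ => (α (k+1) * α (k+1)) * (δ ^ (2*k+3) / (2*k+3)))
          = fun δ : ℝ => (α (k+1) * α (k+1)) / ((2*k+3 : ℕ) : ℝ) * δ ^ (2*k+3) := by
        funext δ; push_cast; ring
      rw [heq]
      exact (isTheta_refl (fun δ : ℝ => δ ^ (2*k+3)) (𝓝[>] (0:ℝ))).const_mul_left hne
    refine hmain.add_isLittleO ?_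
    refine Asymptotics.IsLittleO.fun_sum fun q hq => ?_
    have hq' := Finset.mem_erase.mp hq
    have hq1 := (Finset.mem_Icc.mp (Finset.mem_product.mp hq'.2).1).1
    have hq2 := (Finset.mem_Icc.mp (Finset.mem_product.mp hq'.2).2).1
    have hne : q.1 ≠ k + 1 ∨ q.2 ≠ k + 1 := by
      by_contra h
      push_neg at h
      exact hq'.1 (Prod.ext h.1 h.2)
    have hlt : 2*k+3 < q.1 + q.2 + 1 := by omega
    have := (pow_isLittleO_pow' hlt).const_mul_left
      ((α q.1 * α q.2) / ((q.1 + q.2 + 1 : ℕ) : ℝ))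
    refine this.congr_left fun δ => ?_
    push_cast; ring
  -- A is Θ(δ)
  have hAθ : A =Θ[𝓝[>] (0:ℝ)] fun δ => δ := by
    have hcont : Continuous fun x : ℝ => (g.eval x) ^ 2 := g.continuous.pow 2
    have hG : HasDerivAt (fun u : ℝ => ∫ x in z..u, (g.eval x) ^ 2)
        ((g.eval z) ^ 2) z :=
      intervalIntegral.integral_hasDerivAt_right
        (hcont.intervalIntegrable _ _)
        (hcont.stronglyMeasurableAtFilter _ _)
        hcont.continuousAt
    have hA0 : HasDerivAt A ((g.eval z) ^ 2) 0 := by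
      have hu : HasDerivAt (fun x : ℝ => z + x) 1 0 := by
        simpa using (hasDerivAt_id (0:ℝ)).const_add z
      have hG' : HasDerivAt (fun u : ℝ => ∫ x in z..u, (g.eval x) ^ 2)
          ((g.eval z) ^ 2) ((fun x : ℝ => z + x) 0) := by simpa using hG
      have hcomp := hG'.comp (0:ℝ) hu
      simpa [hA, Function.comp_def] using hcomp
    have hlo : (fun δ : ℝ => A δ - δ * (g.eval z) ^ 2) =o[𝓝[>] (0:ℝ)] fun δ => δ := by
      have h := (hasDerivAt_iff_isLittleO.mp hA0).mono (nhdsWithin_le_nhds (s := Set.Ioi (0:ℝ)))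
      have hA00 : A 0 = 0 := by simp [hA]
      refine (h.congr ?_ ?_)
      · intro δ; simp [hA00, smul_eq_mul, mul_comm]
      · intro δ; simp
    have hmain : (fun δ : ℝ => δ * (g.eval z) ^ 2) =Θ[𝓝[>] (0:ℝ)] fun δ => δ := by
      have hne : (g.eval z) ^ 2 ≠ 0 := pow_ne_zero _ hg
      have heq : (fun δ : ℝ => δ * (g.eval z) ^ 2)
          = fun δ : ℝ => (g.eval z) ^ 2 * δ := by funext δ; ring
      rw [heq]
      exact (isTheta_refl (fun δ : ℝ => δ) (𝓝[>] (0:ℝ))).const_mul_left hne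
    have h2 : (fun δ : ℝ => δ * (g.eval z) ^ 2 + (A δ - δ * (g.eval z) ^ 2))
        =Θ[𝓝[>] (0:ℝ)] fun δ => δ := hmain.add_isLittleO hlo
    have heq : A = fun δ : ℝ => δ * (g.eval z) ^ 2 + (A δ - δ * (g.eval z) ^ 2) := by
      funext δ; ring
    rw [heq]
    exact h2
  have h3 := hAθ.mul hBθ
  have heq : (fun δ : ℝ => δ ^ (2*k+4)) = fun δ : ℝ => δ * δ ^ (2*k+3) := by
    funext δ
    rw [show 2*k+4 = 1 + (2*k+3) by omega, pow_add, pow_one]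
  rw [heq]
  exact h3
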